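/- Let n ≥ 2 and 0 ≤ k ≤ n−2 be integers. In the ring of formal power series ℤ⟦u⟧, the coefficient of u^k in the series ((1+u)^{n−k−1})⁻¹ · (1−u)⁻¹ equals Σ_{i=0}^{k} (−1)^i · 2^{k−i} · binom(n−1, i). -/

import Mathlib

open PowerSeries

open Finset in
lemma key (a : ℕ) : ∀ k : ℕ,
    ∑ i ∈ range (k+1), (-1:ℤ)^i * ((a+i).choose i : ℤ)
      = ∑ i ∈ range (k+1), (-1:ℤ)^i * 2^(k-i) * ((a+k+1).choose i : ℤ)
  | 0 => by simp
  | (k+1) => by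
    have ih := key a k
    set S : ℤ := ∑ i ∈ range (k+1), (-1:ℤ)^i * 2^(k-i) * ((a+k+1).choose i : ℤ) with hS
    have h2S : ∑ i ∈ range (k+1), (-1:ℤ)^i * 2^(k+1-i) * ((a+k+1).choose i : ℤ) = 2 * S := by
      rw [hS, Finset.mul_sum]
      refine Finset.sum_congr rfl fun i hi => ?_
      have : k + 1 - i = (k - i) + 1 := by
        have := Finset.mem_range.mp hi; omega
      rw [this]; ring
    rw [sum_range_succ, ih]
    conv_rhs => rw [sum_range_succ']
    have hg1 : ∀ i ∈ range (k+1),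
        (-1:ℤ)^(i+1) * 2^(k+1-(i+1)) * ((a+(k+1)+1).choose (i+1) : ℤ)
          = (-1:ℤ)^(i+1) * 2^(k-i) * ((a+k+1).choose i : ℤ)
            + (-1:ℤ)^(i+1) * 2^(k+1-(i+1)) * ((a+k+1).choose (i+1) : ℤ) := by
      intro i hi
      have : a + (k+1) + 1 = (a+k+1) + 1 := by omega
      rw [this, Nat.choose_succ_succ']
      push_cast
      ring
    rw [Finset.sum_congr rfl hg1, Finset.sum_add_distrib]
    have hA : ∑ i ∈ range (k+1), (-1:ℤ)^(i+1) * 2^(k-i) * ((a+k+1).choose i : ℤ) = -S := by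
      rw [hS, ← Finset.sum_neg_distrib]
      exact Finset.sum_congr rfl fun i _ => by ring
    have hB : ∑ i ∈ range (k+1), (-1:ℤ)^(i+1) * 2^(k+1-(i+1)) * ((a+k+1).choose (i+1) : ℤ)
        = 2 * S + (-1:ℤ)^(k+1) * ((a+k+1).choose (k+1) : ℤ) - 2^(k+1) := by
      have := Finset.sum_range_succ' (fun j => (-1:ℤ)^j * 2^(k+1-j) * ((a+k+1).choose j : ℤ)) (k+1)
      rw [Finset.sum_range_succ, h2S] at this
      simp only [pow_zero, one_mul, Nat.sub_zero, Nat.choose_zero_right, Nat.cast_one, mul_one,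
        Nat.sub_self] at this
      linarith [this]
    rw [hA, hB]
    have : a + (k+1) = a + k + 1 := by omega
    rw [this]
    push_cast
    simp only [Nat.choose_zero_right, Nat.cast_one, Nat.sub_zero]
    ring

/-- Let `n ≥ 2` and `0 ≤ k ≤ n−2`. In `ℤ⟦u⟧`, the coefficient of `u^k`
in `((1+u)^{n−k−1})⁻¹ · (1−u)⁻¹` equals `Σ_{i=0}^{k} (−1)^i · 2^{k−i} · C(n−1, i)`.
(The inverses are witnessed by power series `f`, `g` with
`f · (1+u)^{n−k−1} = 1` and `g · (1−u) = 1`.) -/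
theorem coeff_inv_mul_inv (n k : ℕ) (hn : 2 ≤ n) (hk : k ≤ n - 2)
    (f g : PowerSeries ℤ)
    (hf : f * (1 + X) ^ (n - k - 1) = 1) (hg : g * (1 - X) = 1) :
    coeff k (f * g) =
      ∑ i ∈ Finset.range (k + 1), (-1) ^ i * 2 ^ (k - i) * ((n - 1).choose i : ℤ) := by
  set a := n - k - 2 with ha
  have hm : n - k - 1 = a + 1 := by omega
  have hn1 : n - 1 = a + k + 1 := by omega
  -- g is the geometric series
  have hg' : g = mk 1 := by
    have h1 : (mk 1 : ℤ⟦X⟧) * (1 - X) = 1 := mk_one_mul_one_sub_eq_one ℤ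
    calc g = g * ((mk 1 : ℤ⟦X⟧) * (1 - X)) := by rw [h1, mul_one]
      _ = (g * (1 - X)) * mk 1 := by ring
      _ = mk 1 := by rw [hg, one_mul]
  -- rescale f
  have hres : rescale (-1 : ℤ) ((1 + X : ℤ⟦X⟧)) = 1 - X := by
    ext j
    rw [coeff_rescale]
    cases j with
    | zero => simp
    | succ m =>
      cases m with
      | zero => simp
      | succ p => simp [coeff_one, coeff_X]
  have hf2 : rescale (-1 : ℤ) f * (1 - X) ^ (a + 1) = 1 := by
    have := congrArg (rescale (-1 : ℤ)) hf
    rw [map_mul, map_pow, hres, map_one, hm] at this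
    exact this
  have hval : rescale (-1 : ℤ) f = ((invOneSubPow ℤ (a+1) : (ℤ⟦X⟧)ˣ) : ℤ⟦X⟧) := by
    have hvi : ((invOneSubPow ℤ (a+1)).inv : ℤ⟦X⟧) = (1 - X) ^ (a+1) :=
      invOneSubPow_inv_eq_one_sub_pow ℤ (a+1)
    have h2 : ((1 - X : ℤ⟦X⟧) ^ (a+1)) * ((invOneSubPow ℤ (a+1) : (ℤ⟦X⟧)ˣ) : ℤ⟦X⟧) = 1 := by
      rw [← hvi]; exact (invOneSubPow ℤ (a+1)).inv_val
    calc rescale (-1 : ℤ) f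
        = rescale (-1 : ℤ) f * (((1 - X : ℤ⟦X⟧) ^ (a+1)) * ((invOneSubPow ℤ (a+1) : (ℤ⟦X⟧)ˣ) : ℤ⟦X⟧)) := by
          rw [h2, mul_one]
      _ = (rescale (-1 : ℤ) f * (1 - X) ^ (a+1)) * ((invOneSubPow ℤ (a+1) : (ℤ⟦X⟧)ˣ) : ℤ⟦X⟧) := by ring
      _ = _ := by rw [hf2, one_mul]
  have hcoefff : ∀ j : ℕ, coeff j f = (-1:ℤ)^j * ((a+j).choose a : ℤ) := by
    intro j
    have h1 : coeff j (rescale (-1:ℤ) f) = (-1:ℤ)^j * coeff j f := coeff_rescale f (-1) j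
    rw [hval, invOneSubPow_val_succ_eq_mk_add_choose, coeff_mk] at h1
    have : (-1:ℤ)^j * ((-1:ℤ)^j * coeff j f) = coeff j f := by
      rw [← mul_assoc, ← pow_add, show j + j = 2*j from by ring, pow_mul]
      norm_num
    rw [← this, ← h1]
  rw [hg', coeff_mul, Finset.Nat.sum_antidiagonal_eq_sum_range_succ_mk]
  simp only [coeff_mk, Pi.one_apply, mul_one]
  calc ∑ i ∈ Finset.range (k+1), coeff i f
      = ∑ i ∈ Finset.range (k+1), (-1:ℤ)^i * ((a+i).choose i : ℤ) := by
        refine Finset.sum_congr rfl fun i _ => ?_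
        have hsym : (a+i).choose a = (a+i).choose i := by
          rw [← Nat.choose_symm (Nat.le_add_right a i)]
          congr 1
          omega
        rw [hcoefff i, hsym]
    _ = ∑ i ∈ Finset.range (k+1), (-1:ℤ)^i * 2^(k-i) * ((a+k+1).choose i : ℤ) := key a k
    _ = _ := by rw [hn1]
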